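/- Let λ_0, λ_1 > 0 and α ∈ (0,1). The function D(p,q) = ((2-q)H(p) + pH(q))/(2pλ_1 + (2-p-q)λ_0) attains its maximum over the curve γ_α = {(p,q) ∈ [0,1]² : α = 2pq/(2+p-q)} at the unique pair (p,q) ∈ γ_α ∩ (0,1)² satisfying α(λ_1-λ_0)·log(p(1-q)/((1-p)q)) + λ_0·log(p²(1-q)/(1-p)) - 2λ_1·log(1-p) = 0. -/

import Mathlib

open Filter Set MeasureTheory
open scoped ENNReal

/-- The entropy function `H(p) = -p log p - (1-p) log(1-p)` (with `H(0) = H(1) = 0`,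
which holds automatically since `Real.log 0 = 0`). -/
noncomputable def Hent (p : ℝ) : ℝ := -p * Real.log p - (1 - p) * Real.log (1 - p)

/-- The function `D(p,q) = ((2-q)H(p) + pH(q))/(2pλ₁ + (2-p-q)λ₀)`. -/
noncomputable def Dfun (lam0 lam1 p q : ℝ) : ℝ :=
  ((2 - q) * Hent p + p * Hent q) / (2 * p * lam1 + (2 - p - q) * lam0)

/-- The curve `γ_α = {(p,q) ∈ [0,1]² : α = 2pq/(2+p-q)}`. -/
def gammaCurve (α : ℝ) : Set (ℝ × ℝ) :=
  {pq | pq.1 ∈ Set.Icc (0 : ℝ) 1 ∧ pq.2 ∈ Set.Icc (0 : ℝ) 1 ∧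
    α = 2 * pq.1 * pq.2 / (2 + pq.1 - pq.2)}

noncomputable def Qf (α p : ℝ) : ℝ := α * (2 + p) / (2 * p + α)

noncomputable def psiF (l0 l1 α p : ℝ) : ℝ :=
  (α * (l1 - l0) + 2 * l0) * Real.log p
  - (α * (l1 - l0) + l0 + 2 * l1) * Real.log (1 - p)
  - α * (l1 - l0) * Real.log (Qf α p)
  + (α * (l1 - l0) + l0) * Real.log (1 - Qf α p)

section

variable {lam0 lam1 α : ℝ}

lemma aa_pos (hα : α ∈ Set.Ioo (0:ℝ) 1) : 0 < α / (2 - α) :=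
  div_pos hα.1 (by linarith [hα.2])

lemma aa_lt_one (hα : α ∈ Set.Ioo (0:ℝ) 1) : α / (2 - α) < 1 :=
  (div_lt_one (by linarith [hα.2])).2 (by linarith [hα.2])

lemma s_pos (hα : α ∈ Set.Ioo (0:ℝ) 1) {p : ℝ} (hp : 0 ≤ p) : 0 < 2 * p + α := by
  nlinarith [hα.1]

lemma Qf_pos (hα : α ∈ Set.Ioo (0:ℝ) 1) {p : ℝ} (hp : 0 ≤ p) : 0 < Qf α p := by
  have := s_pos hα hp
  exact div_pos (by nlinarith [hα.1]) this

lemma one_sub_Qf (hα : α ∈ Set.Ioo (0:ℝ) 1) {p : ℝ} (hp : 0 ≤ p) :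
    1 - Qf α p = (p * (2 - α) - α) / (2 * p + α) := by
  have hs := (s_pos hα hp).ne'
  unfold Qf; field_simp; ring

lemma Qf_lt_one (hα : α ∈ Set.Ioo (0:ℝ) 1) {p : ℝ} (hp : α / (2 - α) < p) : Qf α p < 1 := by
  have h2 : (0:ℝ) < 2 - α := by linarith [hα.2]
  have hp0 : 0 ≤ p := le_of_lt (lt_of_le_of_lt (le_of_lt (aa_pos hα)) hp)
  have := one_sub_Qf hα hp0
  have hnum : 0 < p * (2 - α) - α := by
    have := (div_lt_iff₀ h2).1 hp; nlinarith
  nlinarith [div_pos hnum (s_pos hα hp0)]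

lemma Qf_le_one (hα : α ∈ Set.Ioo (0:ℝ) 1) {p : ℝ} (hp : α / (2 - α) ≤ p) : Qf α p ≤ 1 := by
  have h2 : (0:ℝ) < 2 - α := by linarith [hα.2]
  have hp0 : 0 ≤ p := le_trans (le_of_lt (aa_pos hα)) hp
  have := one_sub_Qf hα hp0
  have hnum : 0 ≤ p * (2 - α) - α := by
    have := (div_le_iff₀ h2).1 hp; nlinarith
  nlinarith [div_nonneg hnum (le_of_lt (s_pos hα hp0))]

lemma two_sub_Qf (hα : α ∈ Set.Ioo (0:ℝ) 1) {p : ℝ} (hp0 : 0 < p) (hp1 : p ≤ 1) :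
    0 < 2 - p - Qf α p := by
  have hs := s_pos hα (le_of_lt hp0)
  have key : 2 - p - Qf α p = 2 * p * (2 - p - α) / (2 * p + α) := by
    unfold Qf; field_simp; ring
  rw [key]
  apply div_pos _ hs
  have : (0:ℝ) < 2 - p - α := by linarith [hα.2]
  positivity

lemma M_pos (h0 : 0 < lam0) (h1 : 0 < lam1) (hα : α ∈ Set.Ioo (0:ℝ) 1)
    {p : ℝ} (hp0 : 0 < p) (hp1 : p ≤ 1) :
    0 < 2 * p * lam1 + (2 - p - Qf α p) * lam0 := by
  have := two_sub_Qf hα hp0 hp1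
  nlinarith

lemma mem_gamma_iff (hα : α ∈ Set.Ioo (0:ℝ) 1) (p q : ℝ) :
    (p, q) ∈ gammaCurve α ↔ p ∈ Set.Icc (α/(2-α)) 1 ∧ q = Qf α p := by
  have h2 : (0:ℝ) < 2 - α := by linarith [hα.2]
  constructor
  · rintro ⟨hp, hq, heq⟩
    simp only [Set.mem_Icc] at hp hq
    have hden : (0:ℝ) < 2 + p - q := by linarith [hp.1, hq.2]
    have heq2 : α * (2 + p - q) = 2 * p * q := by
      field_simp at heq; linarith [heq]
    have hs : 0 < 2 * p + α := s_pos hα hp.1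
    have hqv : q = Qf α p := by
      unfold Qf; rw [eq_div_iff hs.ne']; nlinarith
    refine ⟨⟨?_, hp.2⟩, hqv⟩
    · rw [div_le_iff₀ h2]
      have : α * (2 + p) = q * (2 * p + α) := by nlinarith
      nlinarith [hq.2, hs]
  · rintro ⟨hp, rfl⟩
    simp only [Set.mem_Icc] at hp
    have ha0 := aa_pos hα
    have hp0 : 0 < p := lt_of_lt_of_le ha0 hp.1
    have hs : 0 < 2 * p + α := s_pos hα (le_of_lt hp0)
    have hq0 := Qf_pos hα (le_of_lt hp0)
    have hq1 := Qf_le_one hα hp.1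
    refine ⟨⟨by linarith, hp.2⟩, ⟨by linarith, hq1⟩, ?_⟩
    have hden : 2 + p - Qf α p = 2 * p * (2 + p) / (2 * p + α) := by
      unfold Qf; field_simp; ring
    simp only
    rw [hden]
    have hrw : 2 * p * Qf α p = α * (2 * p * (2 + p) / (2 * p + α)) := by
      unfold Qf; field_simp
    rw [hrw, mul_div_assoc, div_self (by positivity), mul_one]

end
section

variable {lam0 lam1 α : ℝ}

lemma hasDerivAt_Qf (hα : α ∈ Set.Ioo (0:ℝ) 1) {p : ℝ} (hp : 0 ≤ p) :
    HasDerivAt (Qf α) (α * (α - 4) / (2 * p + α) ^ 2) p := by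
  have hs := s_pos hα hp
  have hnum : HasDerivAt (fun x : ℝ => α * (2 + x)) α p := by
    simpa using ((hasDerivAt_id p).const_add (2:ℝ)).const_mul α
  have hden : HasDerivAt (fun x : ℝ => 2 * x + α) 2 p := by
    simpa using ((hasDerivAt_id p).const_mul (2:ℝ)).add_const α
  have h := hnum.div hden hs.ne'
  refine h.congr_deriv ?_; symm
  field_simp
  ring

lemma hasDerivAt_Hent {x : ℝ} (hx0 : x ≠ 0) (hx1 : x ≠ 1) :
    HasDerivAt Hent (Real.log (1 - x) - Real.log x) x := by
  have h1x : (1:ℝ) - x ≠ 0 := sub_ne_zero.2 (Ne.symm hx1)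
  have h1 := Real.hasDerivAt_mul_log hx0
  have hin : HasDerivAt (fun y : ℝ => 1 - y) (-1) x := by
    simpa using (hasDerivAt_id x).const_sub (1:ℝ)
  have h2 : HasDerivAt (fun y : ℝ => (1 - y) * Real.log (1 - y))
      ((Real.log (1 - x) + 1) * (-1)) x :=
    (Real.hasDerivAt_mul_log h1x).comp x hin
  have h3 := (h1.neg).sub h2
  have hfun : Hent = fun y : ℝ => -(y * Real.log y) - (1 - y) * Real.log (1 - y) := by
    funext y; unfold Hent; ring
  rw [hfun]
  refine h3.congr_deriv ?_; symm
  ring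

set_option maxHeartbeats 1000000 in
lemma core_identity (p α l0 l1 A B C D : ℝ) (hs : 2*p+α ≠ 0) :
    ((0 - α*(α-4)/(2*p+α)^2) * (-p*A - (1-p)*B)
      + (2 - α*(2+p)/(2*p+α)) * (B - A)
      + (1 * (-(α*(2+p)/(2*p+α))*C - (1-α*(2+p)/(2*p+α))*D)
        + p * ((D - C) * (α*(α-4)/(2*p+α)^2))))
      * (2*p*l1 + (2-p-α*(2+p)/(2*p+α))*l0)
    - ((2 - α*(2+p)/(2*p+α)) * (-p*A - (1-p)*B)
        + p * (-(α*(2+p)/(2*p+α))*C - (1-α*(2+p)/(2*p+α))*D))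
      * ((2*1)*l1 + ((0-1) - α*(α-4)/(2*p+α)^2)*l0)
    = (-(2*p^2*(4-α))/(2*p+α)^2) *
      ((α*(l1-l0)+2*l0)*A - (α*(l1-l0)+l0+2*l1)*B - α*(l1-l0)*C + (α*(l1-l0)+l0)*D) := by
  have hs' : p * 2 + α ≠ 0 := by rwa [mul_comm] at hs
  have h1 : ((p * (α*(α-4)/(2*p+α)^2) - (2 - α*(2+p)/(2*p+α))) *
        (2*p*l1 + (2 - p - α*(2+p)/(2*p+α))*l0)
      + (2 - α*(2+p)/(2*p+α)) * p * (2*l1 + (-1 - α*(α-4)/(2*p+α)^2)*l0))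
      = (-(2*p^2*(4-α))/(2*p+α)^2) * (α*(l1-l0)+2*l0) := by
    field_simp; ring
  have h2 : (((α*(α-4)/(2*p+α)^2) * (1-p) + (2 - α*(2+p)/(2*p+α))) *
        (2*p*l1 + (2 - p - α*(2+p)/(2*p+α))*l0)
      + (2 - α*(2+p)/(2*p+α)) * (1-p) * (2*l1 + (-1 - α*(α-4)/(2*p+α)^2)*l0))
      = (-(2*p^2*(4-α))/(2*p+α)^2) * (-(α*(l1-l0)+l0+2*l1)) := by
    field_simp; ring
  have h3 : ((-(α*(2+p)/(2*p+α)) - p * (α*(α-4)/(2*p+α)^2)) *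
        (2*p*l1 + (2 - p - α*(2+p)/(2*p+α))*l0)
      + p * (α*(2+p)/(2*p+α)) * (2*l1 + (-1 - α*(α-4)/(2*p+α)^2)*l0))
      = (-(2*p^2*(4-α))/(2*p+α)^2) * (-(α*(l1-l0))) := by
    field_simp; ring
  have h4 : ((p * (α*(α-4)/(2*p+α)^2) - (1 - α*(2+p)/(2*p+α))) *
        (2*p*l1 + (2 - p - α*(2+p)/(2*p+α))*l0)
      + p * (1 - α*(2+p)/(2*p+α)) * (2*l1 + (-1 - α*(α-4)/(2*p+α)^2)*l0))
      = (-(2*p^2*(4-α))/(2*p+α)^2) * (α*(l1-l0)+l0) := by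
    field_simp; ring
  linear_combination A * h1 + B * h2 + C * h3 + D * h4


set_option maxHeartbeats 1000000 in
lemma hasDerivAt_gF (h0 : 0 < lam0) (h1 : 0 < lam1) (hα : α ∈ Set.Ioo (0:ℝ) 1)
    {p : ℝ} (hp : p ∈ Set.Ioo (α/(2-α)) 1) :
    HasDerivAt (fun x => Dfun lam0 lam1 x (Qf α x))
      (-(2 * p ^ 2 * (4 - α)) /
          ((2 * p + α) ^ 2 * (2 * p * lam1 + (2 - p - Qf α p) * lam0) ^ 2)
        * psiF lam0 lam1 α p) p := by
  have ha0 := aa_pos hα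
  have hp0 : 0 < p := lt_trans ha0 hp.1
  have hp1 : p < 1 := hp.2
  have hs := s_pos hα hp0.le
  have hq0 := Qf_pos hα hp0.le
  have hq1 := Qf_lt_one hα hp.1
  have hM := M_pos h0 h1 hα hp0 hp1.le
  have h1p : (1:ℝ) - p ≠ 0 := by linarith
  have h1q : (1:ℝ) - Qf α p ≠ 0 := by linarith
  have hQ := hasDerivAt_Qf hα hp0.le
  have hHp := hasDerivAt_Hent hp0.ne' hp1.ne
  have hHq := hasDerivAt_Hent hq0.ne' (ne_of_lt hq1)
  have hHqc : HasDerivAt (fun x => Hent (Qf α x))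
      ((Real.log (1 - Qf α p) - Real.log (Qf α p)) * (α * (α - 4) / (2 * p + α) ^ 2)) p :=
    hHq.comp p hQ
  have hN : HasDerivAt (fun x => (2 - Qf α x) * Hent x + x * Hent (Qf α x))
      (((0 - α * (α - 4) / (2 * p + α) ^ 2) * Hent p
          + (2 - Qf α p) * (Real.log (1 - p) - Real.log p))
        + (1 * Hent (Qf α p)
          + p * ((Real.log (1 - Qf α p) - Real.log (Qf α p))
              * (α * (α - 4) / (2 * p + α) ^ 2)))) p :=
    (((hasDerivAt_const p (2:ℝ)).sub hQ).mul hHp).add ((hasDerivAt_id p).mul hHqc)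
  have hMd : HasDerivAt (fun x => 2 * x * lam1 + (2 - x - Qf α x) * lam0)
      ((2 * 1) * lam1 + ((0 - 1) - α * (α - 4) / (2 * p + α) ^ 2) * lam0) p :=
    ((((hasDerivAt_id p).const_mul (2:ℝ)).mul_const lam1)).add
      ((((hasDerivAt_const p (2:ℝ)).sub (hasDerivAt_id p)).sub hQ).mul_const lam0)
  have hdiv := hN.div hMd hM.ne'
  have hgoal : (fun x => Dfun lam0 lam1 x (Qf α x))
      = fun x => ((2 - Qf α x) * Hent x + x * Hent (Qf α x))
          / (2 * x * lam1 + (2 - x - Qf α x) * lam0) := by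
    funext x; rfl
  rw [hgoal]
  refine hdiv.congr_deriv ?_; symm
  have hMne : 2 * p * lam1 + (2 - p - Qf α p) * lam0 ≠ 0 := hM.ne'
  have hsne : (2 * p + α) ≠ 0 := hs.ne'
  simp only [psiF, Hent]
  have hq_eq : Qf α p = α * (2 + p) / (2 * p + α) := rfl
  rw [hq_eq] at hMne ⊢
  rw [core_identity p α lam0 lam1 (Real.log p) (Real.log (1 - p))
    (Real.log (α * (2 + p) / (2 * p + α))) (Real.log (1 - α * (2 + p) / (2 * p + α))) hsne]
  rw [div_mul_eq_mul_div, div_mul_eq_mul_div, div_div]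

end
section

variable {lam0 lam1 α : ℝ}

lemma Qf_sub_alpha (hα : α ∈ Set.Ioo (0:ℝ) 1) {p : ℝ} (hp : 0 ≤ p) :
    Qf α p - α = α * (2 - p - α) / (2 * p + α) := by
  have hs := (s_pos hα hp).ne'
  unfold Qf; field_simp; ring

lemma alpha_lt_Qf (hα : α ∈ Set.Ioo (0:ℝ) 1) {p : ℝ} (hp0 : 0 ≤ p) (hp1 : p ≤ 1) :
    α < Qf α p := by
  have hs := s_pos hα hp0
  have h := Qf_sub_alpha hα hp0
  have : 0 < α * (2 - p - α) / (2 * p + α) := by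
    apply div_pos _ hs
    have : (0:ℝ) < 2 - p - α := by linarith [hα.2]
    exact mul_pos hα.1 this
  linarith

lemma hasDerivAt_psiF (h0 : 0 < lam0) (h1 : 0 < lam1) (hα : α ∈ Set.Ioo (0:ℝ) 1)
    {p : ℝ} (hp : p ∈ Set.Ioo (α/(2-α)) 1) :
    HasDerivAt (psiF lam0 lam1 α)
      ((α*(lam1-lam0)+2*lam0) / p + (α*(lam1-lam0)+lam0+2*lam1) / (1-p)
        + (α*(4-α)/(2*p+α)^2) * ((α*lam1 + lam0*(Qf α p - α)) / (Qf α p * (1 - Qf α p)))) p := by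
  have ha0 := aa_pos hα
  have hp0 : 0 < p := lt_trans ha0 hp.1
  have hp1 : p < 1 := hp.2
  have hs := s_pos hα hp0.le
  have hq0 := Qf_pos hα hp0.le
  have hq1 := Qf_lt_one hα hp.1
  have h1p : (1:ℝ) - p ≠ 0 := by linarith
  have h1q : (1:ℝ) - Qf α p ≠ 0 := by linarith
  have hQ := hasDerivAt_Qf hα hp0.le
  have d1 : HasDerivAt (fun x : ℝ => Real.log x) p⁻¹ p := Real.hasDerivAt_log hp0.ne'
  have d2 : HasDerivAt (fun x : ℝ => Real.log (1 - x)) ((1-p)⁻¹ * (-1)) p := by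
    have hin : HasDerivAt (fun y : ℝ => 1 - y) (-1) p := by
      simpa using (hasDerivAt_id p).const_sub (1:ℝ)
    exact (Real.hasDerivAt_log h1p).comp p hin
  have d3 : HasDerivAt (fun x => Real.log (Qf α x))
      ((Qf α p)⁻¹ * (α * (α-4)/(2*p+α)^2)) p :=
    (Real.hasDerivAt_log hq0.ne').comp p hQ
  have d4 : HasDerivAt (fun x => Real.log (1 - Qf α x))
      ((1 - Qf α p)⁻¹ * (-(α * (α-4)/(2*p+α)^2))) p :=
    (Real.hasDerivAt_log h1q).comp (h₂ := Real.log) p (hQ.const_sub 1)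
  have hsum := (((d1.const_mul (α*(lam1-lam0)+2*lam0)).sub
      (d2.const_mul (α*(lam1-lam0)+lam0+2*lam1))).sub
      (d3.const_mul (α*(lam1-lam0)))).add (d4.const_mul (α*(lam1-lam0)+lam0))
  have hfun : psiF lam0 lam1 α = fun x =>
      (α*(lam1-lam0)+2*lam0) * Real.log x - (α*(lam1-lam0)+lam0+2*lam1) * Real.log (1-x)
      - (α*(lam1-lam0)) * Real.log (Qf α x) + (α*(lam1-lam0)+lam0) * Real.log (1-Qf α x) := by
    funext x; simp only [psiF]
  rw [hfun]
  refine hsum.congr_deriv ?_; symm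
  have hqa := alpha_lt_Qf hα hp0.le hp1.le
  field_simp
  ring

lemma psiF_deriv_pos (h0 : 0 < lam0) (h1 : 0 < lam1) (hα : α ∈ Set.Ioo (0:ℝ) 1)
    {p : ℝ} (hp : p ∈ Set.Ioo (α/(2-α)) 1) :
    0 < (α*(lam1-lam0)+2*lam0) / p + (α*(lam1-lam0)+lam0+2*lam1) / (1-p)
        + (α*(4-α)/(2*p+α)^2) * ((α*lam1 + lam0*(Qf α p - α)) / (Qf α p * (1 - Qf α p))) := by
  have ha0 := aa_pos hα
  have hp0 : 0 < p := lt_trans ha0 hp.1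
  have hp1 : p < 1 := hp.2
  have hs := s_pos hα hp0.le
  have hq0 := Qf_pos hα hp0.le
  have hq1 := Qf_lt_one hα hp.1
  have hqa := alpha_lt_Qf hα hp0.le hp1.le
  have t1 : 0 < (α*(lam1-lam0)+2*lam0) / p := by
    apply div_pos _ hp0
    have : α*(lam1-lam0)+2*lam0 = α*lam1 + (2-α)*lam0 := by ring
    rw [this]
    have := hα.1; have := hα.2; nlinarith
  have t2 : 0 < (α*(lam1-lam0)+lam0+2*lam1) / (1-p) := by
    apply div_pos _ (by linarith)
    have : α*(lam1-lam0)+lam0+2*lam1 = α*lam1 + (1-α)*lam0 + 2*lam1 := by ring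
    rw [this]
    have := hα.1; have := hα.2; nlinarith
  have t3 : 0 < (α*(4-α)/(2*p+α)^2) * ((α*lam1 + lam0*(Qf α p - α)) / (Qf α p * (1 - Qf α p))) := by
    apply mul_pos
    · apply div_pos _ (pow_pos hs 2)
      exact mul_pos hα.1 (by linarith [hα.2])
    · apply div_pos _ (mul_pos hq0 (by linarith))
      have := mul_pos hα.1 h1
      nlinarith
  linarith

lemma psiF_strictMono (h0 : 0 < lam0) (h1 : 0 < lam1) (hα : α ∈ Set.Ioo (0:ℝ) 1) :
    StrictMonoOn (psiF lam0 lam1 α) (Set.Ioo (α/(2-α)) 1) := by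
  apply strictMonoOn_of_deriv_pos (convex_Ioo _ _)
  · intro x hx
    exact (hasDerivAt_psiF h0 h1 hα hx).differentiableAt.continuousAt.continuousWithinAt
  · intro x hx
    rw [interior_Ioo] at hx
    rw [(hasDerivAt_psiF h0 h1 hα hx).deriv]
    exact psiF_deriv_pos h0 h1 hα hx

end

section

variable {lam0 lam1 α : ℝ}

lemma Qf_at_a (hα : α ∈ Set.Ioo (0:ℝ) 1) : Qf α (α/(2-α)) = 1 := by
  have h2 : (2:ℝ) - α ≠ 0 := by linarith [hα.2]
  have hs := (s_pos hα (aa_pos hα).le).ne'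
  unfold Qf at *
  rw [div_eq_one_iff_eq hs]
  field_simp
  ring

lemma continuousAt_Qf (hα : α ∈ Set.Ioo (0:ℝ) 1) {x : ℝ} (hx : 0 ≤ x) :
    ContinuousAt (Qf α) x := by
  have hs := (s_pos hα hx).ne'
  exact ContinuousAt.div (by fun_prop) (by fun_prop) hs

lemma exists_psiF_zero (h0 : 0 < lam0) (h1 : 0 < lam1) (hα : α ∈ Set.Ioo (0:ℝ) 1) :
    ∃ ps ∈ Set.Ioo (α/(2-α)) 1, psiF lam0 lam1 α ps = 0 := by
  set a := α / (2 - α) with ha_def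
  have ha0 := aa_pos hα
  have ha1 := aa_lt_one hα
  -- tendsto atBot at a from the right
  have hT1 : Filter.Tendsto (psiF lam0 lam1 α) (nhdsWithin a (Set.Ioi a)) Filter.atBot := by
    have hc : ContinuousAt (fun x => (α*(lam1-lam0)+2*lam0) * Real.log x
        - (α*(lam1-lam0)+lam0+2*lam1) * Real.log (1-x)
        - (α*(lam1-lam0)) * Real.log (Qf α x)) a := by
      have hQc := continuousAt_Qf hα ha0.le
      have hl1 : ContinuousAt Real.log a := Real.continuousAt_log ha0.ne'
      have hl2 : ContinuousAt (fun x : ℝ => Real.log (1-x)) a :=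
        (Real.continuousAt_log (by linarith : (1:ℝ) - a ≠ 0)).comp (by fun_prop)
      have hl3 : ContinuousAt (fun x => Real.log (Qf α x)) a := by
        apply (Real.continuousAt_log _).comp hQc
        rw [Qf_at_a hα]; norm_num
      exact ((hl1.const_mul _).sub (hl2.const_mul _)).sub (hl3.const_mul _)
    have h1to : Filter.Tendsto (fun p => 1 - Qf α p) (nhdsWithin a (Set.Ioi a))
        (nhdsWithin 0 (Set.Ioi 0)) := by
      rw [tendsto_nhdsWithin_iff]
      constructor
      · have : ContinuousAt (fun p => 1 - Qf α p) a := by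
          exact (continuousAt_const.sub (continuousAt_Qf hα ha0.le))
        have := this.continuousWithinAt (s := Set.Ioi a)
        have h0' : (1:ℝ) - Qf α a = 0 := by rw [Qf_at_a hα]; ring
        rw [ContinuousWithinAt] at this
        rw [h0'] at this
        exact this
      · filter_upwards [Ioo_mem_nhdsGT_of_mem (Set.mem_Ico.2 ⟨le_refl a, ha1⟩)] with x hx
        have := Qf_lt_one hα (hx.1 : a < x)
        exact Set.mem_Ioi.2 (by linarith)
    have hlog : Filter.Tendsto (fun p => Real.log (1 - Qf α p))
        (nhdsWithin a (Set.Ioi a)) Filter.atBot :=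
      Real.tendsto_log_nhdsGT_zero.comp h1to
    have hc4 : 0 < α*(lam1-lam0)+lam0 := by
      have : α*(lam1-lam0)+lam0 = α*lam1 + (1-α)*lam0 := by ring
      rw [this]; have := hα.1; have := hα.2; nlinarith
    have hmul := hlog.const_mul_atBot hc4
    have := (hc.continuousWithinAt.tendsto).add_atBot hmul
    exact this
  -- tendsto atTop at 1 from the left
  have hT2 : Filter.Tendsto (psiF lam0 lam1 α) (nhdsWithin 1 (Set.Iio 1)) Filter.atTop := by
    have hq1pos : 0 < Qf α 1 := Qf_pos hα (by norm_num)
    have hq1lt : Qf α 1 < 1 := Qf_lt_one hα ha1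
    have hc : ContinuousAt (fun x => (α*(lam1-lam0)+2*lam0) * Real.log x
        - (α*(lam1-lam0)) * Real.log (Qf α x)
        + (α*(lam1-lam0)+lam0) * Real.log (1 - Qf α x)) 1 := by
      have hQc := continuousAt_Qf hα (le_of_lt one_pos)
      have hl1 : ContinuousAt Real.log (1:ℝ) := Real.continuousAt_log one_ne_zero
      have hl3 : ContinuousAt (fun x => Real.log (Qf α x)) 1 :=
        (Real.continuousAt_log hq1pos.ne').comp hQc
      have hl4 : ContinuousAt (fun x => Real.log (1 - Qf α x)) 1 := by
        have hne : (1:ℝ) - Qf α 1 ≠ 0 := by linarith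
        have houter : ContinuousAt (fun y : ℝ => Real.log (1 - y)) (Qf α 1) :=
          (Real.continuousAt_log hne).comp (continuousAt_const.sub continuousAt_id)
        exact houter.comp hQc
      exact ((hl1.const_mul _).sub (hl3.const_mul _)).add (hl4.const_mul _)
    have h1to : Filter.Tendsto (fun p : ℝ => 1 - p) (nhdsWithin 1 (Set.Iio 1))
        (nhdsWithin 0 (Set.Ioi 0)) := by
      rw [tendsto_nhdsWithin_iff]
      constructor
      · have hcont : Continuous (fun p : ℝ => 1 - p) := continuous_const.sub continuous_id
        have : Filter.Tendsto (fun p : ℝ => 1 - p) (nhds 1) (nhds 0) := by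
          have := hcont.tendsto (1:ℝ)
          simpa using this
        exact this.mono_left nhdsWithin_le_nhds
      · filter_upwards [self_mem_nhdsWithin] with x hx
        exact Set.mem_Ioi.2 (by simp at hx; linarith)
    have hlog : Filter.Tendsto (fun p : ℝ => Real.log (1 - p))
        (nhdsWithin 1 (Set.Iio 1)) Filter.atBot :=
      Real.tendsto_log_nhdsGT_zero.comp h1to
    have hc2 : 0 < α*(lam1-lam0)+lam0+2*lam1 := by
      have : α*(lam1-lam0)+lam0+2*lam1 = α*lam1 + (1-α)*lam0 + 2*lam1 := by ring
      rw [this]; have := hα.1; have := hα.2; nlinarith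
    have hmul := hlog.const_mul_atBot hc2
    have hneg : Filter.Tendsto (fun p : ℝ => -((α*(lam1-lam0)+lam0+2*lam1) * Real.log (1-p)))
        (nhdsWithin 1 (Set.Iio 1)) Filter.atTop := Filter.tendsto_neg_atBot_atTop.comp hmul
    have hsum := (hc.continuousWithinAt.tendsto).add_atTop hneg
    have : ∀ x : ℝ, ((α*(lam1-lam0)+2*lam0) * Real.log x
        - (α*(lam1-lam0)) * Real.log (Qf α x)
        + (α*(lam1-lam0)+lam0) * Real.log (1 - Qf α x))
        + -((α*(lam1-lam0)+lam0+2*lam1) * Real.log (1-x)) = psiF lam0 lam1 α x := by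
      intro x; simp only [psiF]; ring
    exact Filter.Tendsto.congr this hsum
  -- get points
  have hev1 := hT1.eventually (Filter.eventually_lt_atBot (0:ℝ))
  have hmem1 : Set.Ioo a 1 ∈ nhdsWithin a (Set.Ioi a) :=
    Ioo_mem_nhdsGT_of_mem (Set.mem_Ico.2 ⟨le_refl a, ha1⟩)
  obtain ⟨p1, hp1neg, hp1mem⟩ := (hev1.and (Filter.eventually_of_mem hmem1 (fun x hx => hx))).exists
  have hev2 := hT2.eventually (Filter.eventually_gt_atTop (0:ℝ))
  have hmem2 : Set.Ioo p1 1 ∈ nhdsWithin 1 (Set.Iio 1) :=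
    Ioo_mem_nhdsLT_of_mem (Set.mem_Ioc.2 ⟨hp1mem.2, le_refl 1⟩)
  obtain ⟨p2, hp2pos, hp2mem⟩ := (hev2.and (Filter.eventually_of_mem hmem2 (fun x hx => hx))).exists
  have hp2mem' : p2 ∈ Set.Ioo a 1 := ⟨lt_trans hp1mem.1 hp2mem.1, hp2mem.2⟩
  have hcont : ContinuousOn (psiF lam0 lam1 α) (Set.Icc p1 p2) := by
    intro x hx
    have hx' : x ∈ Set.Ioo a 1 :=
      ⟨lt_of_lt_of_le hp1mem.1 hx.1, lt_of_le_of_lt hx.2 hp2mem.2⟩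
    exact (hasDerivAt_psiF h0 h1 hα hx').differentiableAt.continuousAt.continuousWithinAt
  have hiv := intermediate_value_Icc (le_of_lt hp2mem.1) hcont
  have h0mem : (0:ℝ) ∈ Set.Icc (psiF lam0 lam1 α p1) (psiF lam0 lam1 α p2) :=
    ⟨le_of_lt hp1neg, le_of_lt hp2pos⟩
  obtain ⟨ps, hps, hps0⟩ := hiv h0mem
  exact ⟨ps, ⟨lt_of_lt_of_le hp1mem.1 hps.1, lt_of_le_of_lt hps.2 hp2mem.2⟩, hps0⟩

end


section
variable {lam0 lam1 α : ℝ}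

lemma continuous_Hent : Continuous Hent := by
  have h := Real.continuous_mul_log
  have hfun : Hent = fun y : ℝ => -(y * Real.log y) -
      ((fun z : ℝ => z * Real.log z) ∘ (fun y : ℝ => 1 - y)) y := by
    funext y; simp only [Hent, Function.comp]; ring
  rw [hfun]
  exact (h.neg).sub (h.comp (continuous_const.sub continuous_id))

lemma continuousOn_gF (h0 : 0 < lam0) (h1 : 0 < lam1) (hα : α ∈ Set.Ioo (0:ℝ) 1) :
    ContinuousOn (fun x => Dfun lam0 lam1 x (Qf α x)) (Set.Icc (α/(2-α)) 1) := by
  have ha0 := aa_pos hα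
  have hQc : ContinuousOn (Qf α) (Set.Icc (α/(2-α)) 1) := fun x hx =>
    (continuousAt_Qf hα (le_trans ha0.le hx.1)).continuousWithinAt
  have hH := continuous_Hent
  have hfun : (fun x => Dfun lam0 lam1 x (Qf α x)) = fun x =>
      ((2 - Qf α x) * Hent x + x * Hent (Qf α x))
        / (2 * x * lam1 + (2 - x - Qf α x) * lam0) := rfl
  rw [hfun]
  apply ContinuousOn.div
  · exact ((continuousOn_const.sub hQc).mul hH.continuousOn).add
      (continuousOn_id.mul (hH.comp_continuousOn hQc))
  · exact ((continuousOn_const.mul continuousOn_id).mul continuousOn_const).add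
      (((continuousOn_const.sub continuousOn_id).sub hQc).mul continuousOn_const)
  · intro x hx
    exact (M_pos h0 h1 hα (lt_of_lt_of_le ha0 hx.1) hx.2).ne'

lemma eq_equals_psiF (hα : α ∈ Set.Ioo (0:ℝ) 1)
    {p : ℝ} (hp : p ∈ Set.Ioo (α/(2-α)) 1) :
    α * (lam1 - lam0) * Real.log (p * (1 - Qf α p) / ((1 - p) * Qf α p)) +
      lam0 * Real.log (p ^ 2 * (1 - Qf α p) / (1 - p)) -
      2 * lam1 * Real.log (1 - p) = psiF lam0 lam1 α p := by
  have ha0 := aa_pos hα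
  have hp0 : 0 < p := lt_trans ha0 hp.1
  have hp1 : p < 1 := hp.2
  have hq0 := Qf_pos hα hp0.le
  have hq1 := Qf_lt_one hα hp.1
  have h1p : (0:ℝ) < 1 - p := by linarith
  have h1q : (0:ℝ) < 1 - Qf α p := by linarith
  rw [Real.log_div (by positivity) (by positivity), Real.log_mul hp0.ne' h1q.ne',
    Real.log_mul h1p.ne' hq0.ne', Real.log_div (by positivity) h1p.ne',
    Real.log_mul (by positivity) h1q.ne', Real.log_pow]
  simp only [psiF]
  push_cast
  ring

lemma gF_lt_max (h0 : 0 < lam0) (h1 : 0 < lam1) (hα : α ∈ Set.Ioo (0:ℝ) 1)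
    {ps : ℝ} (hps : ps ∈ Set.Ioo (α/(2-α)) 1) (hzero : psiF lam0 lam1 α ps = 0)
    {x : ℝ} (hx : x ∈ Set.Icc (α/(2-α)) 1) (hne : x ≠ ps) :
    Dfun lam0 lam1 x (Qf α x) < Dfun lam0 lam1 ps (Qf α ps) := by
  set a := α/(2-α) with ha_def
  have ha0 := aa_pos hα
  have hderiv : ∀ y ∈ Set.Ioo a 1, deriv (fun x => Dfun lam0 lam1 x (Qf α x)) y
      = -(2 * y ^ 2 * (4 - α)) /
          ((2 * y + α) ^ 2 * (2 * y * lam1 + (2 - y - Qf α y) * lam0) ^ 2)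
        * psiF lam0 lam1 α y := fun y hy => (hasDerivAt_gF h0 h1 hα hy).deriv
  have hKneg : ∀ y ∈ Set.Ioo a 1, -(2 * y ^ 2 * (4 - α)) /
      ((2 * y + α) ^ 2 * (2 * y * lam1 + (2 - y - Qf α y) * lam0) ^ 2) < 0 := by
    intro y hy
    have hy0 : 0 < y := lt_trans ha0 hy.1
    have hs := s_pos hα hy0.le
    have hM := M_pos h0 h1 hα hy0 hy.2.le
    apply div_neg_of_neg_of_pos
    · have : 0 < 2 * y ^ 2 * (4 - α) := by nlinarith [hα.2]
      linarith
    · positivity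
  have hmono := psiF_strictMono h0 h1 hα
  -- strict mono on [a, ps]
  have hGmono : StrictMonoOn (fun x => Dfun lam0 lam1 x (Qf α x)) (Set.Icc a ps) := by
    apply strictMonoOn_of_deriv_pos (convex_Icc _ _)
    · exact (continuousOn_gF h0 h1 hα).mono (Set.Icc_subset_Icc_right hps.2.le)
    · intro y hy
      rw [interior_Icc] at hy
      have hy' : y ∈ Set.Ioo a 1 := ⟨hy.1, lt_trans hy.2 hps.2⟩
      rw [hderiv y hy']
      have hpsin : psiF lam0 lam1 α y < 0 := by
        have := hmono hy' hps hy.2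
        rw [hzero] at this; exact this
      exact mul_pos_of_neg_of_neg (hKneg y hy') hpsin
  have hGanti : StrictAntiOn (fun x => Dfun lam0 lam1 x (Qf α x)) (Set.Icc ps 1) := by
    apply strictAntiOn_of_deriv_neg (convex_Icc _ _)
    · exact (continuousOn_gF h0 h1 hα).mono (Set.Icc_subset_Icc_left hps.1.le)
    · intro y hy
      rw [interior_Icc] at hy
      have hy' : y ∈ Set.Ioo a 1 := ⟨lt_trans hps.1 hy.1, hy.2⟩
      rw [hderiv y hy']
      have hpsin : 0 < psiF lam0 lam1 α y := by
        have := hmono hps hy' hy.1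
        rw [hzero] at this; exact this
      exact mul_neg_of_neg_of_pos (hKneg y hy') hpsin
  rcases lt_or_gt_of_ne hne with hlt | hgt
  · exact hGmono ⟨hx.1, hlt.le⟩ ⟨hps.1.le, le_refl ps⟩ hlt
  · exact hGanti ⟨le_refl ps, hps.2.le⟩ ⟨hgt.le, hx.2⟩ hgt

end

/-- For `λ₀, λ₁ > 0` and `α ∈ (0,1)`, `D(p,q)` attains its maximum over `γ_α` at the unique
pair `(p,q) ∈ γ_α ∩ (0,1)²` satisfying the equation
`α(λ₁-λ₀) log(p(1-q)/((1-p)q)) + λ₀ log(p²(1-q)/(1-p)) - 2λ₁ log(1-p) = 0`,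
and at no other point of `γ_α`. -/
theorem stmt11 (lam0 lam1 : ℝ) (h0 : 0 < lam0) (h1 : 0 < lam1)
    (α : ℝ) (hα : α ∈ Set.Ioo (0 : ℝ) 1) :
    (∃! pq : ℝ × ℝ, pq ∈ gammaCurve α ∧ pq.1 ∈ Set.Ioo (0 : ℝ) 1 ∧
        pq.2 ∈ Set.Ioo (0 : ℝ) 1 ∧
        α * (lam1 - lam0) * Real.log (pq.1 * (1 - pq.2) / ((1 - pq.1) * pq.2)) +
          lam0 * Real.log (pq.1 ^ 2 * (1 - pq.2) / (1 - pq.1)) -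
          2 * lam1 * Real.log (1 - pq.1) = 0) ∧
    ∀ p q : ℝ, (p, q) ∈ gammaCurve α → p ∈ Set.Ioo (0 : ℝ) 1 → q ∈ Set.Ioo (0 : ℝ) 1 →
      α * (lam1 - lam0) * Real.log (p * (1 - q) / ((1 - p) * q)) +
        lam0 * Real.log (p ^ 2 * (1 - q) / (1 - p)) -
        2 * lam1 * Real.log (1 - p) = 0 →
      (∀ xy ∈ gammaCurve α, Dfun lam0 lam1 xy.1 xy.2 ≤ Dfun lam0 lam1 p q) ∧
      (∀ xy ∈ gammaCurve α, xy ≠ (p, q) →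
        Dfun lam0 lam1 xy.1 xy.2 < Dfun lam0 lam1 p q) := by
  have ha0 := aa_pos hα
  have ha1 := aa_lt_one hα
  obtain ⟨ps, hps, hzero⟩ := exists_psiF_zero h0 h1 hα
  have hps0 : 0 < ps := lt_trans ha0 hps.1
  have hq0 := Qf_pos hα hps0.le
  have hq1 := Qf_lt_one hα hps.1
  -- a point of the curve in the open square satisfying the equation iff psiF vanishes
  have key : ∀ y1 y2 : ℝ, (y1, y2) ∈ gammaCurve α → y1 ∈ Set.Ioo (0:ℝ) 1 →
      y2 ∈ Set.Ioo (0:ℝ) 1 →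
      (y1 ∈ Set.Ioo (α/(2-α)) 1 ∧ y2 = Qf α y1) := by
    intro y1 y2 hyγ hy1 hy2
    obtain ⟨hy1c, hy2e⟩ := (mem_gamma_iff hα y1 y2).1 hyγ
    have hne : y1 ≠ α/(2-α) := by
      intro h
      rw [h, Qf_at_a hα] at hy2e
      exact (ne_of_lt hy2.2) hy2e
    exact ⟨⟨lt_of_le_of_ne hy1c.1 (Ne.symm hne), hy1.2⟩, hy2e⟩
  constructor
  · -- existence and uniqueness
    refine ⟨(ps, Qf α ps), ⟨?_, ⟨hps0, hps.2⟩, ⟨hq0, hq1⟩, ?_⟩, ?_⟩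
    · exact (mem_gamma_iff hα ps (Qf α ps)).2 ⟨⟨hps.1.le, hps.2.le⟩, rfl⟩
    · simpa using (eq_equals_psiF hα hps).trans hzero
    · rintro ⟨y1, y2⟩ ⟨hyγ, hy1, hy2, hyeq⟩
      obtain ⟨hy1o, hy2e⟩ := key y1 y2 hyγ hy1 hy2
      have hpsiy : psiF lam0 lam1 α y1 = 0 := by
        rw [← eq_equals_psiF hα hy1o]
        simpa [← hy2e] using hyeq
      have : y1 = ps := (psiF_strictMono h0 h1 hα).injOn hy1o hps (by rw [hpsiy, hzero])
      subst this
      simp [hy2e]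
  · -- maximality
    intro p q hγ hp hq heq
    obtain ⟨hpo, hqe⟩ := key p q hγ hp hq
    have hpsip : psiF lam0 lam1 α p = 0 := by
      rw [← eq_equals_psiF hα hpo]
      simpa [← hqe] using heq
    have hDpq : Dfun lam0 lam1 p q = Dfun lam0 lam1 p (Qf α p) := by rw [hqe]
    constructor
    · rintro ⟨x1, x2⟩ hxy
      obtain ⟨hx1c, hx2e⟩ := (mem_gamma_iff hα x1 x2).1 hxy
      simp only at hx2e ⊢
      rw [hx2e, hDpq]
      rcases eq_or_ne x1 p with h | h
      · rw [h]
      · exact (gF_lt_max h0 h1 hα hpo hpsip hx1c h).le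
    · rintro ⟨x1, x2⟩ hxy hne
      obtain ⟨hx1c, hx2e⟩ := (mem_gamma_iff hα x1 x2).1 hxy
      simp only at hx2e ⊢
      rw [hx2e, hDpq]
      have h : x1 ≠ p := by
        intro h; apply hne
        rw [h] at hx2e ⊢
        rw [hx2e, ← hqe]
      exact gF_lt_max h0 h1 hα hpo hpsip hx1c h
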